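/- arXiv:0805.4487 — 4 statements merged into one kernel-verified Lean document; each statement's English description precedes it below -/
import Mathlib

section
/- Let a ∈ ℝ³ with z := √(a₁² + a₂²) ≠ 0 and z² − a₃² > 0, and set μ := √(z² − a₃²). Let φ, χ ∈ ℝ satisfy sin φ = a₁/z, cos φ = a₂/z, sinh χ = a₃/μ, cosh χ = z/μ. Then P₁(−χ)·R₃(−φ)·a = (0, μ, 0). -/
open Matrix

/-- Rotation about the third axis:
rows `(cos q, sin q, 0)`, `(−sin q, cos q, 0)`, `(0,0,1)`. -/
noncomputable def R3 (q : ℝ) : Matrix (Fin 3) (Fin 3) ℝ :=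
  !![Real.cos q, Real.sin q, 0;
     -Real.sin q, Real.cos q, 0;
     0, 0, 1]

/-- Hyperbolic rotation about the first axis:
rows `(1,0,0)`, `(0, cosh χ, sinh χ)`, `(0, sinh χ, cosh χ)`. -/
noncomputable def P1 (χ : ℝ) : Matrix (Fin 3) (Fin 3) ℝ :=
  !![1, 0, 0;
     0, Real.cosh χ, Real.sinh χ;
     0, Real.sinh χ, Real.cosh χ]

/-- If `sin φ = a₁/z`, `cos φ = a₂/z`, `sinh χ = a₃/μ`, `cosh χ = z/μ` with
`z = √(a₁² + a₂²) ≠ 0`, `z² − a₃² > 0` and `μ = √(z² − a₃²)`, then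
`P₁(−χ)·R₃(−φ)·a = (0, μ, 0)`. -/
theorem stmt_11 (a : Fin 3 → ℝ) (φ χ : ℝ)
    (hz : Real.sqrt (a 0 ^ 2 + a 1 ^ 2) ≠ 0)
    (hμpos : Real.sqrt (a 0 ^ 2 + a 1 ^ 2) ^ 2 - a 2 ^ 2 > 0)
    (hsinφ : Real.sin φ = a 0 / Real.sqrt (a 0 ^ 2 + a 1 ^ 2))
    (hcosφ : Real.cos φ = a 1 / Real.sqrt (a 0 ^ 2 + a 1 ^ 2))
    (hsinhχ : Real.sinh χ =
        a 2 / Real.sqrt (Real.sqrt (a 0 ^ 2 + a 1 ^ 2) ^ 2 - a 2 ^ 2))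
    (hcoshχ : Real.cosh χ = Real.sqrt (a 0 ^ 2 + a 1 ^ 2) /
        Real.sqrt (Real.sqrt (a 0 ^ 2 + a 1 ^ 2) ^ 2 - a 2 ^ 2)) :
    (P1 (-χ) * R3 (-φ)).mulVec a =
      ![0, Real.sqrt (Real.sqrt (a 0 ^ 2 + a 1 ^ 2) ^ 2 - a 2 ^ 2), 0] := by

  set z := Real.sqrt (a 0 ^ 2 + a 1 ^ 2) with hzdef
  set μ := Real.sqrt (z ^ 2 - a 2 ^ 2) with hμdef
  have hz2 : z ^ 2 = a 0 ^ 2 + a 1 ^ 2 := Real.sq_sqrt (by positivity)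
  have hμ2 : μ ^ 2 = z ^ 2 - a 2 ^ 2 := Real.sq_sqrt (le_of_lt hμpos)
  have hμ : μ ≠ 0 := by positivity
  funext i
  fin_cases i <;>
    simp [P1, R3, mulVec, dotProduct, Fin.sum_univ_succ, Real.cos_neg,
      Real.sin_neg, Real.cosh_neg, Real.sinh_neg, hsinφ, hcosφ, hsinhχ, hcoshχ,
      ← hzdef, ← hμdef] <;>
    field_simp
  case _ => ring
  case _ => linear_combination (-1)*hz2 - hμ2
  case _ => linear_combination (a 2)*hz2
end

section
/- Let h, a : ℝ → ℝ³ with a differentiable and a′(t) = h(t) ×ᵥ a(t) for all t (standard cross product). Set z(t) := √(a₁(t)² + a₂(t)²) and λ(t) := √(a₁(t)² + a₂(t)² + a₃(t)²), and assume z(t) ≠ 0 for all t. Let τ : ℝ → ℝ be differentiable with τ′(t) = −(a₁h₁ + a₂h₂)/z² for all t. Then for any constants A, B, C ∈ ℝ, the function x(t) := A·a(t) − (λ(t)B/z(t))·cos(λ(t)τ(t)+C)·(a₂, −a₁, 0) + (B/z(t))·sin(λ(t)τ(t)+C)·(a₃a₁, a₃a₂, −z²) is differentiable and satisfies x′(t)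 = h(t) ×ᵥ x(t) for all t. -/
open Matrix

set_option maxHeartbeats 1000000 in
/-- General solution of the SU(2)-type equation `ẋ = h ×ᵥ x` built from a
special solution `a` (with `a′ = h ×ᵥ a` and `z(t) = √(a₁² + a₂²) ≠ 0`) and an
effective time `τ` with `τ′ = −(a₁h₁ + a₂h₂)/z²`: for any constants `A, B, C`,
`x(t) = A·a − (λB/z)·cos(λτ + C)·(a₂, −a₁, 0) + (B/z)·sin(λτ + C)·(a₃a₁, a₃a₂, −z²)`
is differentiable and satisfies `x′(t) = h(t) ×ᵥ x(t)`, where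
`λ(t) = √(a₁² + a₂² + a₃²)`. -/
theorem stmt_12 (h a : ℝ → Fin 3 → ℝ) (τ : ℝ → ℝ) (A B C : ℝ)
    (ha : ∀ t : ℝ, HasDerivAt a (h t ⨯₃ a t) t)
    (hz : ∀ t : ℝ, Real.sqrt (a t 0 ^ 2 + a t 1 ^ 2) ≠ 0)
    (hτ : ∀ t : ℝ, HasDerivAt τ
      (-((a t 0 * h t 0 + a t 1 * h t 1) / (a t 0 ^ 2 + a t 1 ^ 2))) t)
    (x : ℝ → Fin 3 → ℝ)
    (hx : ∀ t : ℝ, x t =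
      A • a t
      - ((Real.sqrt (a t 0 ^ 2 + a t 1 ^ 2 + a t 2 ^ 2) * B /
            Real.sqrt (a t 0 ^ 2 + a t 1 ^ 2)) *
          Real.cos (Real.sqrt (a t 0 ^ 2 + a t 1 ^ 2 + a t 2 ^ 2) * τ t + C)) •
            ![a t 1, -(a t 0), 0]
      + ((B / Real.sqrt (a t 0 ^ 2 + a t 1 ^ 2)) *
          Real.sin (Real.sqrt (a t 0 ^ 2 + a t 1 ^ 2 + a t 2 ^ 2) * τ t + C)) •
            ![a t 2 * a t 0, a t 2 * a t 1, -(a t 0 ^ 2 + a t 1 ^ 2)]) :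
    ∀ t : ℝ, HasDerivAt x (h t ⨯₃ x t) t := by
  have hxf : x = fun t => A • a t
      - ((Real.sqrt (a t 0 ^ 2 + a t 1 ^ 2 + a t 2 ^ 2) * B /
            Real.sqrt (a t 0 ^ 2 + a t 1 ^ 2)) *
          Real.cos (Real.sqrt (a t 0 ^ 2 + a t 1 ^ 2 + a t 2 ^ 2) * τ t + C)) •
            ![a t 1, -(a t 0), 0]
      + ((B / Real.sqrt (a t 0 ^ 2 + a t 1 ^ 2)) *
          Real.sin (Real.sqrt (a t 0 ^ 2 + a t 1 ^ 2 + a t 2 ^ 2) * τ t + C)) •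
            ![a t 2 * a t 0, a t 2 * a t 1, -(a t 0 ^ 2 + a t 1 ^ 2)] := funext hx
  subst hxf
  intro t
  -- component derivatives of a
  have ha0 : HasDerivAt (fun s => a s 0) (h t 1 * a t 2 - h t 2 * a t 1) t := by
    simpa [cross_apply] using hasDerivAt_pi.mp (ha t) 0
  have ha1 : HasDerivAt (fun s => a s 1) (h t 2 * a t 0 - h t 0 * a t 2) t := by
    simpa [cross_apply] using hasDerivAt_pi.mp (ha t) 1
  have ha2 : HasDerivAt (fun s => a s 2) (h t 0 * a t 1 - h t 1 * a t 0) t := by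
    simpa [cross_apply] using hasDerivAt_pi.mp (ha t) 2
  have hq0 : a t 0 ^ 2 + a t 1 ^ 2 ≠ 0 := by
    intro H; exact hz t (by rw [H, Real.sqrt_zero])
  have hqpos : 0 < a t 0 ^ 2 + a t 1 ^ 2 := lt_of_le_of_ne (by positivity) (Ne.symm hq0)
  have hr0 : a t 0 ^ 2 + a t 1 ^ 2 + a t 2 ^ 2 ≠ 0 := by positivity
  have hq : HasDerivAt (fun s => a s 0 ^ 2 + a s 1 ^ 2)
      ((2:ℕ) * a t 0 ^ 1 * (h t 1 * a t 2 - h t 2 * a t 1)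
        + (2:ℕ) * a t 1 ^ 1 * (h t 2 * a t 0 - h t 0 * a t 2)) t :=
    (ha0.pow 2).add (ha1.pow 2)
  have hr : HasDerivAt (fun s => a s 0 ^ 2 + a s 1 ^ 2 + a s 2 ^ 2)
      (((2:ℕ) * a t 0 ^ 1 * (h t 1 * a t 2 - h t 2 * a t 1)
        + (2:ℕ) * a t 1 ^ 1 * (h t 2 * a t 0 - h t 0 * a t 2))
        + (2:ℕ) * a t 2 ^ 1 * (h t 0 * a t 1 - h t 1 * a t 0)) t :=
    hq.add (ha2.pow 2)
  have hZ := hq.sqrt hq0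
  have hL := hr.sqrt hr0
  have hθ := (hL.mul (hτ t)).add_const C
  have hcos := hθ.cos
  have hsin := hθ.sin
  have hg1 := (hL.mul_const B).div hZ (hz t)
  have hg2 := (hasDerivAt_const t B).div hZ (hz t)
  rw [hasDerivAt_pi]
  intro i
  fin_cases i
  · simp only [Fin.isValue, Fin.reduceFinMk, Pi.add_apply, Pi.sub_apply, Pi.smul_apply, smul_eq_mul,
      Matrix.cons_val_zero]
    have full : HasDerivAt (fun s => A * a s 0
        - (Real.sqrt (a s 0 ^ 2 + a s 1 ^ 2 + a s 2 ^ 2) * B /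
            Real.sqrt (a s 0 ^ 2 + a s 1 ^ 2) *
          Real.cos (Real.sqrt (a s 0 ^ 2 + a s 1 ^ 2 + a s 2 ^ 2) * τ s + C)) * a s 1
        + (B / Real.sqrt (a s 0 ^ 2 + a s 1 ^ 2) *
          Real.sin (Real.sqrt (a s 0 ^ 2 + a s 1 ^ 2 + a s 2 ^ 2) * τ s + C)) *
          (a s 2 * a s 0)) _ t :=
      ((ha0.const_mul A).sub ((hg1.mul hcos).mul ha1)).add ((hg2.mul hsin).mul (ha2.mul ha0))
    convert full using 1
    case e'_4 => rfl
    case e'_5 => rfl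
    have hZ2 : Real.sqrt (a t 0 ^ 2 + a t 1 ^ 2) ^ 2 = a t 0 ^ 2 + a t 1 ^ 2 :=
      Real.sq_sqrt (by positivity)
    have hL2 : Real.sqrt (a t 0 ^ 2 + a t 1 ^ 2 + a t 2 ^ 2) ^ 2
        = a t 0 ^ 2 + a t 1 ^ 2 + a t 2 ^ 2 := Real.sq_sqrt (by positivity)
    have hL0 : Real.sqrt (a t 0 ^ 2 + a t 1 ^ 2 + a t 2 ^ 2) ≠ 0 :=
      Real.sqrt_ne_zero'.mpr (by positivity)
    have hZ0 := hz t
    clear full hg1 hg2 hsin hcos hθ hL hZ hr hq ha0 ha1 ha2 hx hτ hz ha hr0 hqpos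
    simp only [Pi.mul_apply, Pi.div_apply, cross_apply, Fin.isValue, Pi.add_apply, Pi.sub_apply,
      Pi.smul_apply, smul_eq_mul, Pi.neg_apply]
    set a0 := a t 0
    set a1 := a t 1
    set a2 := a t 2
    set h0 := h t 0
    set h1 := h t 1
    set h2 := h t 2
    set T := τ t
    set Z := Real.sqrt (a0 ^ 2 + a1 ^ 2)
    set L := Real.sqrt (a0 ^ 2 + a1 ^ 2 + a2 ^ 2)
    set s := Real.sin (L * T + C)
    set c := Real.cos (L * T + C)
    simp only [cross_apply, Pi.add_apply, Pi.sub_apply, Pi.smul_apply, smul_eq_mul,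
      Matrix.cons_val_zero, Matrix.cons_val_one, Matrix.head_cons, Matrix.cons_val_two,
      Matrix.tail_cons, Nat.cast_ofNat, pow_one]
    field_simp
    linear_combination ((1)*a1^2*h1*L^3*s*B + (-1)*a1^2*a2*h0*L^2*c*B + (-1)*a1^2*a2^2*h1*L*s*B + (-1)*a1^4*h1*L*s*B + (1)*a0*a1*h0*L^3*s*B + (1)*a0*a1*a2*h1*L^2*c*B + (-1)*a0*a1^3*h0*L*s*B + (-1)*a0^2*a2^2*h1*L*s*B + (-1)*a0^2*a1^2*h1*L*s*B + (-1)*a0^3*a1*h0*L*s*B) * hZ2 + ((1)*a1^4*h1*L*s*B + (1)*a0*a1^3*h0*L*s*B + (1)*a0^2*a1^2*h1*L*s*B + (1)*a0^3*a1*h0*L*s*B) * hL2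
  · simp only [Fin.isValue, Fin.reduceFinMk, Pi.add_apply, Pi.sub_apply, Pi.smul_apply, smul_eq_mul,
      Matrix.cons_val_one, Matrix.head_cons]
    have full : HasDerivAt (fun u => A * a u 1
        - (Real.sqrt (a u 0 ^ 2 + a u 1 ^ 2 + a u 2 ^ 2) * B /
            Real.sqrt (a u 0 ^ 2 + a u 1 ^ 2) *
          Real.cos (Real.sqrt (a u 0 ^ 2 + a u 1 ^ 2 + a u 2 ^ 2) * τ u + C)) * (-(a u 0))
        + (B / Real.sqrt (a u 0 ^ 2 + a u 1 ^ 2) *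
          Real.sin (Real.sqrt (a u 0 ^ 2 + a u 1 ^ 2 + a u 2 ^ 2) * τ u + C)) *
          (a u 2 * a u 1)) _ t :=
      ((ha1.const_mul A).sub ((hg1.mul hcos).mul ha0.neg)).add ((hg2.mul hsin).mul (ha2.mul ha1))
    convert full using 1
    case e'_4 => rfl
    case e'_5 => rfl
    case e'_8 => rfl
    have hZ2 : Real.sqrt (a t 0 ^ 2 + a t 1 ^ 2) ^ 2 = a t 0 ^ 2 + a t 1 ^ 2 :=
      Real.sq_sqrt (by positivity)
    have hL2 : Real.sqrt (a t 0 ^ 2 + a t 1 ^ 2 + a t 2 ^ 2) ^ 2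
        = a t 0 ^ 2 + a t 1 ^ 2 + a t 2 ^ 2 := Real.sq_sqrt (by positivity)
    have hL0 : Real.sqrt (a t 0 ^ 2 + a t 1 ^ 2 + a t 2 ^ 2) ≠ 0 :=
      Real.sqrt_ne_zero'.mpr (by positivity)
    have hZ0 := hz t
    clear full hg1 hg2 hsin hcos hθ hL hZ hr hq ha0 ha1 ha2 hx hτ hz ha hr0 hqpos
    simp only [Pi.mul_apply, Pi.div_apply, cross_apply, Fin.isValue, Pi.add_apply, Pi.sub_apply,
      Pi.smul_apply, smul_eq_mul, Pi.neg_apply]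
    set a0 := a t 0
    set a1 := a t 1
    set a2 := a t 2
    set h0 := h t 0
    set h1 := h t 1
    set h2 := h t 2
    set T := τ t
    set Z := Real.sqrt (a0 ^ 2 + a1 ^ 2)
    set L := Real.sqrt (a0 ^ 2 + a1 ^ 2 + a2 ^ 2)
    set s := Real.sin (L * T + C)
    set c := Real.cos (L * T + C)
    simp only [cross_apply, Pi.add_apply, Pi.sub_apply, Pi.smul_apply, smul_eq_mul,
      Matrix.cons_val_zero, Matrix.cons_val_one, Matrix.head_cons, Matrix.cons_val_two,
      Matrix.tail_cons, Nat.cast_ofNat, pow_one]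
    field_simp
    linear_combination ((1)*a1^2*a2^2*h0*L*s*B + (-1)*a0*a1*h1*L^3*s*B + (1)*a0*a1*a2*h0*L^2*c*B + (1)*a0*a1^3*h1*L*s*B + (-1)*a0^2*h0*L^3*s*B + (-1)*a0^2*a2*h1*L^2*c*B + (1)*a0^2*a2^2*h0*L*s*B + (1)*a0^2*a1^2*h0*L*s*B + (1)*a0^3*a1*h1*L*s*B + (1)*a0^4*h0*L*s*B) * hZ2 + ((-1)*a0*a1^3*h1*L*s*B + (-1)*a0^2*a1^2*h0*L*s*B + (-1)*a0^3*a1*h1*L*s*B + (-1)*a0^4*h0*L*s*B) * hL2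
  · simp only [Fin.isValue, Fin.reduceFinMk, Pi.add_apply, Pi.sub_apply, Pi.smul_apply, smul_eq_mul,
      Matrix.cons_val_two, Matrix.tail_cons, Matrix.head_cons, mul_zero, sub_zero]
    have full : HasDerivAt (fun u => A * a u 2
        + (B / Real.sqrt (a u 0 ^ 2 + a u 1 ^ 2) *
          Real.sin (Real.sqrt (a u 0 ^ 2 + a u 1 ^ 2 + a u 2 ^ 2) * τ u + C)) *
          (-(a u 0 ^ 2 + a u 1 ^ 2))) _ t :=
      (ha2.const_mul A).add ((hg2.mul hsin).mul hq.neg)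
    convert full using 1
    case e'_4 => rfl
    case e'_5 => rfl
    have hZ2 : Real.sqrt (a t 0 ^ 2 + a t 1 ^ 2) ^ 2 = a t 0 ^ 2 + a t 1 ^ 2 :=
      Real.sq_sqrt (by positivity)
    have hL2 : Real.sqrt (a t 0 ^ 2 + a t 1 ^ 2 + a t 2 ^ 2) ^ 2
        = a t 0 ^ 2 + a t 1 ^ 2 + a t 2 ^ 2 := Real.sq_sqrt (by positivity)
    have hL0 : Real.sqrt (a t 0 ^ 2 + a t 1 ^ 2 + a t 2 ^ 2) ≠ 0 :=
      Real.sqrt_ne_zero'.mpr (by positivity)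
    have hZ0 := hz t
    clear full hg1 hg2 hsin hcos hθ hL hZ hr hq ha0 ha1 ha2 hx hτ hz ha hr0 hqpos
    simp only [Pi.mul_apply, Pi.div_apply, cross_apply, Fin.isValue, Pi.add_apply, Pi.sub_apply,
      Pi.smul_apply, smul_eq_mul, Pi.neg_apply]
    set a0 := a t 0
    set a1 := a t 1
    set a2 := a t 2
    set h0 := h t 0
    set h1 := h t 1
    set h2 := h t 2
    set T := τ t
    set Z := Real.sqrt (a0 ^ 2 + a1 ^ 2)
    set L := Real.sqrt (a0 ^ 2 + a1 ^ 2 + a2 ^ 2)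
    set s := Real.sin (L * T + C)
    set c := Real.cos (L * T + C)
    simp only [cross_apply, Pi.add_apply, Pi.sub_apply, Pi.smul_apply, smul_eq_mul,
      Matrix.cons_val_zero, Matrix.cons_val_one, Matrix.head_cons, Matrix.cons_val_two,
      Matrix.tail_cons, Nat.cast_ofNat, pow_one]
    field_simp
    linear_combination ((-1)*a1*a2*h0*L*s*B + (1)*a0*a2*h1*L*s*B) * hZ2 + (0) * hL2
end

section
/- Let h, a : ℝ → ℝ³ with a differentiable and a′(t) = h(t) ⋉ a(t) for all t, where ⋉ is the su(1,1) bracket. Set z(t) := √(a₁(t)² + a₂(t)²) and assume z(t) ≠ 0 and z(t)² − a₃(t)² > 0 for all t; set μ(t) := √(z(t)² − a₃(t)²). Let τ : ℝ → ℝ be differentiable with τ′(t) = −(a₁h₁ + a₂h₂)/z² for all t. Then for any constants A, B, C ∈ ℝ, the function x(t) := A·a(t) + (μ(t)B/z(t))·cosh(μ(t)τ(t)+C)·(a₂, −a₁, 0) + (B/z(t))·sinh(μ(t)τ(t)+C)·(a₃a₁, a₃a₂, z²) is differentiable and satisfies x′(t) = h(t) ⋉ x(t) for all t. -/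
/-- The su(1,1) bracket on `ℝ³`:
`a ⋉ b := (a₃b₂ − a₂b₃, a₁b₃ − a₃b₁, a₁b₂ − a₂b₁)`. -/
def su11Bracket (a b : Fin 3 → ℝ) : Fin 3 → ℝ :=
  ![a 2 * b 1 - a 1 * b 2, a 0 * b 2 - a 2 * b 0, a 0 * b 1 - a 1 * b 0]

set_option maxHeartbeats 2000000 in
/-- General solution of the SU(1,1)-type equation `ẋ = h ⋉ x` in the
non-degenerate case, built from a special solution `a` (with `a′ = h ⋉ a`,
`z(t) = √(a₁² + a₂²) ≠ 0` and `z² − a₃² > 0`, `μ = √(z² − a₃²)`) and an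
effective time `τ` with `τ′ = −(a₁h₁ + a₂h₂)/z²`: for any constants `A, B, C`,
`x(t) = A·a + (μB/z)·cosh(μτ + C)·(a₂, −a₁, 0) + (B/z)·sinh(μτ + C)·(a₃a₁, a₃a₂, z²)`
is differentiable and satisfies `x′(t) = h(t) ⋉ x(t)`. -/
theorem stmt_13 (h a : ℝ → Fin 3 → ℝ) (τ : ℝ → ℝ) (A B C : ℝ)
    (ha : ∀ t : ℝ, HasDerivAt a (su11Bracket (h t) (a t)) t)
    (hz : ∀ t : ℝ, Real.sqrt (a t 0 ^ 2 + a t 1 ^ 2) ≠ 0)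
    (hμ : ∀ t : ℝ, Real.sqrt (a t 0 ^ 2 + a t 1 ^ 2) ^ 2 - a t 2 ^ 2 > 0)
    (hτ : ∀ t : ℝ, HasDerivAt τ
      (-((a t 0 * h t 0 + a t 1 * h t 1) / (a t 0 ^ 2 + a t 1 ^ 2))) t)
    (x : ℝ → Fin 3 → ℝ)
    (hx : ∀ t : ℝ, x t =
      A • a t
      + ((Real.sqrt (Real.sqrt (a t 0 ^ 2 + a t 1 ^ 2) ^ 2 - a t 2 ^ 2) * B /
            Real.sqrt (a t 0 ^ 2 + a t 1 ^ 2)) *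
          Real.cosh (Real.sqrt (Real.sqrt (a t 0 ^ 2 + a t 1 ^ 2) ^ 2 - a t 2 ^ 2)
            * τ t + C)) • ![a t 1, -(a t 0), 0]
      + ((B / Real.sqrt (a t 0 ^ 2 + a t 1 ^ 2)) *
          Real.sinh (Real.sqrt (Real.sqrt (a t 0 ^ 2 + a t 1 ^ 2) ^ 2 - a t 2 ^ 2)
            * τ t + C)) • ![a t 2 * a t 0, a t 2 * a t 1, a t 0 ^ 2 + a t 1 ^ 2]) :
    ∀ t : ℝ, HasDerivAt x (su11Bracket (h t) (x t)) t := by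
  have hsq : ∀ s : ℝ, Real.sqrt (a s 0 ^ 2 + a s 1 ^ 2) ^ 2 = a s 0 ^ 2 + a s 1 ^ 2 :=
    fun s => Real.sq_sqrt (by positivity)
  have hxE : x = fun t => A • a t
      + ((Real.sqrt (a t 0 ^ 2 + a t 1 ^ 2 - a t 2 ^ 2) * B /
            Real.sqrt (a t 0 ^ 2 + a t 1 ^ 2)) *
          Real.cosh (Real.sqrt (a t 0 ^ 2 + a t 1 ^ 2 - a t 2 ^ 2)
            * τ t + C)) • ![a t 1, -(a t 0), 0]
      + ((B / Real.sqrt (a t 0 ^ 2 + a t 1 ^ 2)) *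
          Real.sinh (Real.sqrt (a t 0 ^ 2 + a t 1 ^ 2 - a t 2 ^ 2)
            * τ t + C)) • ![a t 2 * a t 0, a t 2 * a t 1, a t 0 ^ 2 + a t 1 ^ 2] := by
    funext s
    rw [hx s, hsq s]
  subst hxE
  intro t
  -- basic positivity facts
  have hrpos : 0 < a t 0 ^ 2 + a t 1 ^ 2 := by
    rcases lt_or_eq_of_le (by positivity : (0:ℝ) ≤ a t 0 ^ 2 + a t 1 ^ 2) with h' | h'
    · exact h'
    · exact absurd (by rw [← h', Real.sqrt_zero]) (hz t)
  have hqpos : 0 < a t 0 ^ 2 + a t 1 ^ 2 - a t 2 ^ 2 := by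
    have := hμ t; rwa [hsq t] at this
  have hzne : Real.sqrt (a t 0 ^ 2 + a t 1 ^ 2) ≠ 0 := hz t
  have hmne : Real.sqrt (a t 0 ^ 2 + a t 1 ^ 2 - a t 2 ^ 2) ≠ 0 :=
    ne_of_gt (Real.sqrt_pos.mpr hqpos)
  -- component derivatives of a
  have ha0 : HasDerivAt (fun s => a s 0) (h t 2 * a t 1 - h t 1 * a t 2) t := by
    simpa [su11Bracket] using hasDerivAt_pi.mp (ha t) 0
  have ha1 : HasDerivAt (fun s => a s 1) (h t 0 * a t 2 - h t 2 * a t 0) t := by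
    simpa [su11Bracket] using hasDerivAt_pi.mp (ha t) 1
  have ha2 : HasDerivAt (fun s => a s 2) (h t 0 * a t 1 - h t 1 * a t 0) t := by
    simpa [su11Bracket] using hasDerivAt_pi.mp (ha t) 2
  -- derivative building blocks
  have hr : HasDerivAt (fun s => a s 0 ^ 2 + a s 1 ^ 2)
      (2 * a t 0 * (h t 2 * a t 1 - h t 1 * a t 2)
        + 2 * a t 1 * (h t 0 * a t 2 - h t 2 * a t 0)) t := by
    refine ((ha0.pow 2).add (ha1.pow 2)).congr_deriv ?_
    push_cast; ring
  have hq : HasDerivAt (fun s => a s 0 ^ 2 + a s 1 ^ 2 - a s 2 ^ 2)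
      (2 * a t 0 * (h t 2 * a t 1 - h t 1 * a t 2)
        + 2 * a t 1 * (h t 0 * a t 2 - h t 2 * a t 0)
        - 2 * a t 2 * (h t 0 * a t 1 - h t 1 * a t 0)) t := by
    refine (hr.sub (ha2.pow 2)).congr_deriv ?_
    push_cast; ring
  have hzd := hr.sqrt (ne_of_gt hrpos)
  have hmd := hq.sqrt (ne_of_gt hqpos)
  have hph := (hmd.mul (hτ t)).add_const C
  have hc := hph.cosh
  have hs := hph.sinh
  have hcoef1 := (hmd.mul_const B).div hzd hzne
  have hcoef2 := (hasDerivAt_const t B).div hzd hzne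
  rw [hasDerivAt_pi]
  intro i
  fin_cases i
  · simp only [su11Bracket, Pi.add_apply, Pi.smul_apply, smul_eq_mul,
      Matrix.cons_val_zero, Matrix.cons_val_one, Matrix.head_cons,
      Matrix.cons_val_two, Matrix.tail_cons, Fin.isValue]
    have T := ((ha0.const_mul A).add ((hcoef1.mul hc).mul ha1)).add
      ((hcoef2.mul hs).mul (ha2.mul ha0))
    refine T.congr_deriv ?_
    simp only [Pi.mul_apply, Pi.div_apply, Pi.add_apply]
    set zt := Real.sqrt (a t 0 ^ 2 + a t 1 ^ 2) with hzt
    set mt := Real.sqrt (a t 0 ^ 2 + a t 1 ^ 2 - a t 2 ^ 2) with hmt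
    set ct := Real.cosh (mt * τ t + C) with hct
    set st := Real.sinh (mt * τ t + C) with hst
    clear_value zt mt ct st
    have hz2 : zt ^ 2 = a t 0 ^ 2 + a t 1 ^ 2 := by
      rw [hzt]; exact Real.sq_sqrt (le_of_lt hrpos)
    have hm2 : mt ^ 2 = zt ^ 2 - a t 2 ^ 2 := by
      rw [hmt, hz2]; exact Real.sq_sqrt (le_of_lt hqpos)
    clear ha hz hμ hτ hx hsq ha0 ha1 ha2 hr hq hzd hmd hph hc hs hcoef1 hcoef2 T
    norm_num [Matrix.cons_val_zero]
    rw [← hz2]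
    field_simp
    ring_nf
    linear_combination
      ((-1) * mt * st * B * (a t 0) * (a t 1) * (h t 0) + (-1) * mt * st * B * (a t 1) ^ 2 * (h t 1) + (-1) * ct * B * (a t 1) ^ 2 * (a t 2) * (h t 0) + (1) * zt ^ 2 * ct * B * (a t 2) * (h t 0) + (-1) * ct * B * (a t 0) ^ 2 * (a t 2) * (h t 0)) * hm2 +
      ((-1) * mt * st * B * (a t 2) ^ 2 * (h t 1) + (1) * zt ^ 2 * mt * st * B * (h t 1) + (1) * zt ^ 2 * ct * B * (a t 2) * (h t 0) + (-1) * ct * B * (a t 2) ^ 3 * (h t 0)) * hz2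
  · simp only [su11Bracket, Pi.add_apply, Pi.smul_apply, smul_eq_mul,
      Matrix.cons_val_zero, Matrix.cons_val_one, Matrix.head_cons,
      Matrix.cons_val_two, Matrix.tail_cons, Fin.isValue]
    have T := ((ha1.const_mul A).add ((hcoef1.mul hc).mul ha0.neg)).add
      ((hcoef2.mul hs).mul (ha2.mul ha1))
    refine T.congr_deriv ?_
    simp only [Pi.mul_apply, Pi.div_apply, Pi.add_apply]
    set zt := Real.sqrt (a t 0 ^ 2 + a t 1 ^ 2) with hzt
    set mt := Real.sqrt (a t 0 ^ 2 + a t 1 ^ 2 - a t 2 ^ 2) with hmt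
    set ct := Real.cosh (mt * τ t + C) with hct
    set st := Real.sinh (mt * τ t + C) with hst
    clear_value zt mt ct st
    have hz2 : zt ^ 2 = a t 0 ^ 2 + a t 1 ^ 2 := by
      rw [hzt]; exact Real.sq_sqrt (le_of_lt hrpos)
    have hm2 : mt ^ 2 = zt ^ 2 - a t 2 ^ 2 := by
      rw [hmt, hz2]; exact Real.sq_sqrt (le_of_lt hqpos)
    clear ha hz hμ hτ hx hsq ha0 ha1 ha2 hr hq hzd hmd hph hc hs hcoef1 hcoef2 T
    norm_num [Matrix.cons_val_one, Matrix.head_cons]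
    rw [← hz2]
    field_simp
    ring_nf
    linear_combination
      ((1) * mt * st * B * (a t 0) ^ 2 * (h t 0) + (-1) * ct * B * (a t 0) ^ 2 * (a t 2) * (h t 1) + (1) * zt ^ 2 * ct * B * (a t 2) * (h t 1) + (-1) * ct * B * (a t 1) ^ 2 * (a t 2) * (h t 1) + (1) * mt * st * B * (a t 0) * (a t 1) * (h t 1)) * hm2 +
      ((1) * mt * st * B * (a t 2) ^ 2 * (h t 0) + (-1) * zt ^ 2 * mt * st * B * (h t 0) + (1) * zt ^ 2 * ct * B * (a t 2) * (h t 1) + (-1) * ct * B * (a t 2) ^ 3 * (h t 1)) * hz2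
  · simp only [su11Bracket, Pi.add_apply, Pi.smul_apply, smul_eq_mul,
      Matrix.cons_val_zero, Matrix.cons_val_one, Matrix.head_cons,
      Matrix.cons_val_two, Matrix.tail_cons, Fin.isValue]
    have T := ((ha2.const_mul A).add ((hcoef1.mul hc).mul_const (0:ℝ))).add
      ((hcoef2.mul hs).mul (hr))
    refine T.congr_deriv ?_
    simp only [Pi.mul_apply, Pi.div_apply, Pi.add_apply]
    set zt := Real.sqrt (a t 0 ^ 2 + a t 1 ^ 2) with hzt
    set mt := Real.sqrt (a t 0 ^ 2 + a t 1 ^ 2 - a t 2 ^ 2) with hmt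
    set ct := Real.cosh (mt * τ t + C) with hct
    set st := Real.sinh (mt * τ t + C) with hst
    clear_value zt mt ct st
    have hz2 : zt ^ 2 = a t 0 ^ 2 + a t 1 ^ 2 := by
      rw [hzt]; exact Real.sq_sqrt (le_of_lt hrpos)
    have hm2 : mt ^ 2 = zt ^ 2 - a t 2 ^ 2 := by
      rw [hmt, hz2]; exact Real.sq_sqrt (le_of_lt hqpos)
    clear ha hz hμ hτ hx hsq ha0 ha1 ha2 hr hq hzd hmd hph hc hs hcoef1 hcoef2 T
    norm_num [Matrix.cons_val_two, Matrix.tail_cons, Matrix.head_cons]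
    rw [← hz2]
    field_simp
    ring_nf
end

section
/- Let h, a : ℝ → ℝ³ with a differentiable and a′(t) = h(t) ⋉ a(t) for all t, where ⋉ is the su(1,1) bracket. Set z(t) := √(a₁(t)² + a₂(t)²), assume z(t) ≠ 0 and the degeneracy condition a₃(t)² = a₁(t)² + a₂(t)² for all t. Let τ : ℝ → ℝ be differentiable with τ′(t) = −(a₁h₁ + a₂h₂)/z² for all t. Then for any constants A, B, C ∈ ℝ, the function x(t) := (A + Bτ + Cτ²)·a(t) + (a₃/z²)(B + 2Cτ)·(a₂, −a₁, 0) + (C/z²)·(−a₁, −a₂, a₃) is differentiable and satisfies x′(t) = h(t) ⋉ x(t) for all t. -/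
set_option maxHeartbeats 2000000 in
/-- General solution of the SU(1,1)-type equation `ẋ = h ⋉ x` in the degenerate
case `a₃² = a₁² + a₂²` (light cone of the su(1,1) form), built from a special
solution `a` (with `a′ = h ⋉ a` and `z(t) = √(a₁² + a₂²) ≠ 0`) and an effective
time `τ` with `τ′ = −(a₁h₁ + a₂h₂)/z²`: for any constants `A, B, C`,
`x(t) = (A + Bτ + Cτ²)·a + (a₃/z²)(B + 2Cτ)·(a₂, −a₁, 0) + (C/z²)·(−a₁, −a₂, a₃)`
is differentiable and satisfies `x′(t) = h(t) ⋉ x(t)`. -/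
theorem stmt_14 (h a : ℝ → Fin 3 → ℝ) (τ : ℝ → ℝ) (A B C : ℝ)
    (ha : ∀ t : ℝ, HasDerivAt a (su11Bracket (h t) (a t)) t)
    (hz : ∀ t : ℝ, Real.sqrt (a t 0 ^ 2 + a t 1 ^ 2) ≠ 0)
    (hdeg : ∀ t : ℝ, a t 2 ^ 2 = a t 0 ^ 2 + a t 1 ^ 2)
    (hτ : ∀ t : ℝ, HasDerivAt τ
      (-((a t 0 * h t 0 + a t 1 * h t 1) / (a t 0 ^ 2 + a t 1 ^ 2))) t)
    (x : ℝ → Fin 3 → ℝ)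
    (hx : ∀ t : ℝ, x t =
      (A + B * τ t + C * τ t ^ 2) • a t
      + (a t 2 / (a t 0 ^ 2 + a t 1 ^ 2) * (B + 2 * C * τ t)) •
          ![a t 1, -(a t 0), 0]
      + (C / (a t 0 ^ 2 + a t 1 ^ 2)) • ![-(a t 0), -(a t 1), a t 2]) :
    ∀ t : ℝ, HasDerivAt x (su11Bracket (h t) (x t)) t := by
  have hDne : ∀ t : ℝ, a t 0 ^ 2 + a t 1 ^ 2 ≠ 0 := by
    intro t ht
    exact hz t (by rw [ht, Real.sqrt_zero])
  have hxf : x = fun s => (A + B * τ s + C * τ s ^ 2) • a s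
      + (a s 2 / (a s 0 ^ 2 + a s 1 ^ 2) * (B + 2 * C * τ s)) •
          ![a s 1, -(a s 0), 0]
      + (C / (a s 0 ^ 2 + a s 1 ^ 2)) • ![-(a s 0), -(a s 1), a s 2] := funext hx
  intro t
  have ha0 : HasDerivAt (fun s => a s 0) (h t 2 * a t 1 - h t 1 * a t 2) t := by
    simpa [su11Bracket] using hasDerivAt_pi.1 (ha t) 0
  have ha1 : HasDerivAt (fun s => a s 1) (h t 0 * a t 2 - h t 2 * a t 0) t := by
    simpa [su11Bracket] using hasDerivAt_pi.1 (ha t) 1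
  have ha2 : HasDerivAt (fun s => a s 2) (h t 0 * a t 1 - h t 1 * a t 0) t := by
    simpa [su11Bracket] using hasDerivAt_pi.1 (ha t) 2
  have hτ' := hτ t
  have hD : HasDerivAt (fun s => a s 0 ^ 2 + a s 1 ^ 2)
      (2 * a t 0 * (h t 2 * a t 1 - h t 1 * a t 2)
        + 2 * a t 1 * (h t 0 * a t 2 - h t 2 * a t 0)) t := by
    have := (ha0.pow 2).add (ha1.pow 2)
    refine this.congr_deriv ?_
    push_cast
    ring
  -- building blocks
  have hP : HasDerivAt (fun s => A + B * τ s + C * τ s ^ 2)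
      (B * (-((a t 0 * h t 0 + a t 1 * h t 1) / (a t 0 ^ 2 + a t 1 ^ 2)))
        + C * (2 * τ t * (-((a t 0 * h t 0 + a t 1 * h t 1) / (a t 0 ^ 2 + a t 1 ^ 2))))) t := by
    have := ((hasDerivAt_const t A).add (hτ'.const_mul B)).add ((hτ'.pow 2).const_mul C)
    refine this.congr_deriv ?_
    push_cast
    ring
  have hQ : HasDerivAt (fun s => a s 2 / (a s 0 ^ 2 + a s 1 ^ 2) * (B + 2 * C * τ s))
      (((h t 0 * a t 1 - h t 1 * a t 0) * (a t 0 ^ 2 + a t 1 ^ 2)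
          - a t 2 * (2 * a t 0 * (h t 2 * a t 1 - h t 1 * a t 2)
            + 2 * a t 1 * (h t 0 * a t 2 - h t 2 * a t 0))) / (a t 0 ^ 2 + a t 1 ^ 2) ^ 2
          * (B + 2 * C * τ t)
        + a t 2 / (a t 0 ^ 2 + a t 1 ^ 2)
          * (2 * C * (-((a t 0 * h t 0 + a t 1 * h t 1) / (a t 0 ^ 2 + a t 1 ^ 2))))) t := by
    have := (ha2.div hD (hDne t)).mul ((hasDerivAt_const t B).add (hτ'.const_mul (2 * C)))
    refine this.congr_deriv ?_
    simp only [Pi.add_apply, Pi.div_apply]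
    ring
  have hR : HasDerivAt (fun s => C / (a s 0 ^ 2 + a s 1 ^ 2))
      ((0 * (a t 0 ^ 2 + a t 1 ^ 2)
        - C * (2 * a t 0 * (h t 2 * a t 1 - h t 1 * a t 2)
          + 2 * a t 1 * (h t 0 * a t 2 - h t 2 * a t 0))) / (a t 0 ^ 2 + a t 1 ^ 2) ^ 2) t :=
    (hasDerivAt_const t C).div hD (hDne t)
  rw [hxf]
  rw [hasDerivAt_pi]
  intro i
  fin_cases i
  · have key := ((hP.mul ha0).add (hQ.mul ha1)).add (hR.mul ha0.neg)
    simp only [Pi.add_apply, Pi.smul_apply, smul_eq_mul, Matrix.cons_val_zero,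
      Matrix.cons_val_one, Matrix.head_cons, Fin.isValue]
    refine key.congr_deriv (Eq.symm ?_)
    simp only [Pi.neg_apply]
    have hd := hDne t
    trans (((-1) * a t 2 * h t 1 * C + (-1) * a t 1 * h t 2 * C + (-1) * a t 1 ^ 2 * a t 2 * h t 1 * A + (-1) * a t 1 ^ 2 * a t 2 * h t 1 * τ t * B + (-1) * a t 1 ^ 2 * a t 2 * h t 1 * τ t ^ 2 * C + (1) * a t 1 ^ 3 * h t 2 * A + (1) * a t 1 ^ 3 * h t 2 * τ t * B + (1) * a t 1 ^ 3 * h t 2 * τ t ^ 2 * C + (-1) * a t 0 * a t 2 * h t 2 * B + (-2) * a t 0 * a t 2 * h t 2 * τ t * C + (-1) * a t 0 ^ 2 * a t 2 * h t 1 * A + (-1) * a t 0 ^ 2 * a t 2 * h t 1 * τ t * B + (-1) * a t 0 ^ 2 * a t 2 * h t 1 * τ t ^ 2 * C + (1) * a t 0 ^ 2 * a t 1 * h t 2 * A + (1) * a t 0 ^ 2 * a t 1 * h t 2 * τ t * B + (1) * a t 0 ^ 2 * a t 1 * h t 2 * τ t ^ 2 * C) / (a t 0 ^ 2 + a t 1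 ^ 2))
    · simp only [su11Bracket, Pi.add_apply, Pi.smul_apply, smul_eq_mul,
        Matrix.cons_val_zero, Matrix.cons_val_one, Matrix.head_cons, Fin.isValue,
        Matrix.cons_val_two, Matrix.tail_cons, Fin.zero_eta, Fin.mk_one]
      field_simp
      ring
    · trans (((-1) * a t 1 ^ 2 * a t 2 * h t 1 * C + (-1) * a t 1 ^ 2 * a t 2 ^ 2 * h t 0 * B + (-2) * a t 1 ^ 2 * a t 2 ^ 2 * h t 0 * τ t * C + (-1) * a t 1 ^ 3 * h t 2 * C + (1) * a t 1 ^ 4 * h t 0 * B + (2) * a t 1 ^ 4 * h t 0 * τ t * C + (-1) * a t 1 ^ 4 * a t 2 * h t 1 * A + (-1) * a t 1 ^ 4 * a t 2 * h t 1 * τ t * B + (-1) * a t 1 ^ 4 * a t 2 * h t 1 * τ t ^ 2 * C + (1) * a t 1 ^ 5 * h t 2 * A + (1) * a t 1 ^ 5 * h t 2 * τ t * B + (1) * a t 1 ^ 5 * h t 2 * τ t ^ 2 * C + (2) * a t 0 * a t 1 * a t 2 ^ 2 * h t 1 * B + (4) * a t 0 * a t 1 * a t 2 ^ 2 * h t 1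 * τ t * C + (-1) * a t 0 * a t 1 ^ 2 * a t 2 * h t 2 * B + (-2) * a t 0 * a t 1 ^ 2 * a t 2 * h t 2 * τ t * C + (-2) * a t 0 * a t 1 ^ 3 * h t 1 * B + (-4) * a t 0 * a t 1 ^ 3 * h t 1 * τ t * C + (-1) * a t 0 ^ 2 * a t 2 * h t 1 * C + (1) * a t 0 ^ 2 * a t 2 ^ 2 * h t 0 * B + (2) * a t 0 ^ 2 * a t 2 ^ 2 * h t 0 * τ t * C + (-1) * a t 0 ^ 2 * a t 1 * h t 2 * C + (-2) * a t 0 ^ 2 * a t 1 ^ 2 * a t 2 * h t 1 * A + (-2) * a t 0 ^ 2 * a t 1 ^ 2 * a t 2 * h t 1 * τ t * B + (-2) * a t 0 ^ 2 * a t 1 ^ 2 * a t 2 * h t 1 * τ t ^ 2 * C + (2) * a t 0 ^ 2 * a t 1 ^ 3 * h t 2 * A + (2) * a t 0 ^ 2 * a t 1 ^ 3 * h t 2 * τ t * B + (2) * a t 0 ^ 2 * a t 1 ^ 3 * h t 2 * τ t ^ 2 * C + (-1) * a t 0 ^ 3 * a t 2 * h t 2 * B + (-2) * a t 0 ^ 3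 * a t 2 * h t 2 * τ t * C + (-2) * a t 0 ^ 3 * a t 1 * h t 1 * B + (-4) * a t 0 ^ 3 * a t 1 * h t 1 * τ t * C + (-1) * a t 0 ^ 4 * h t 0 * B + (-2) * a t 0 ^ 4 * h t 0 * τ t * C + (-1) * a t 0 ^ 4 * a t 2 * h t 1 * A + (-1) * a t 0 ^ 4 * a t 2 * h t 1 * τ t * B + (-1) * a t 0 ^ 4 * a t 2 * h t 1 * τ t ^ 2 * C + (1) * a t 0 ^ 4 * a t 1 * h t 2 * A + (1) * a t 0 ^ 4 * a t 1 * h t 2 * τ t * B + (1) * a t 0 ^ 4 * a t 1 * h t 2 * τ t ^ 2 * C) / (a t 0 ^ 2 + a t 1 ^ 2) ^ 2)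
      · rw [div_eq_div_iff hd (pow_ne_zero 2 hd)]
        linear_combination ((1) * a t 1 ^ 4 * h t 0 * B + (2) * a t 1 ^ 4 * h t 0 * τ t * C + (-2) * a t 0 * a t 1 ^ 3 * h t 1 * B + (-4) * a t 0 * a t 1 ^ 3 * h t 1 * τ t * C + (-2) * a t 0 ^ 3 * a t 1 * h t 1 * B + (-4) * a t 0 ^ 3 * a t 1 * h t 1 * τ t * C + (-1) * a t 0 ^ 4 * h t 0 * B + (-2) * a t 0 ^ 4 * h t 0 * τ t * C) * hdeg t
      · field_simp
        ring
  · have key := ((hP.mul ha1).add (hQ.mul ha0.neg)).add (hR.mul ha1.neg)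
    simp only [Pi.add_apply, Pi.smul_apply, smul_eq_mul, Matrix.cons_val_zero,
      Matrix.cons_val_one, Matrix.head_cons, Fin.isValue]
    refine key.congr_deriv (Eq.symm ?_)
    simp only [Pi.neg_apply]
    have hd := hDne t
    trans (((1) * a t 2 * h t 0 * C + (-1) * a t 1 * a t 2 * h t 2 * B + (-2) * a t 1 * a t 2 * h t 2 * τ t * C + (1) * a t 1 ^ 2 * a t 2 * h t 0 * A + (1) * a t 1 ^ 2 * a t 2 * h t 0 * τ t * B + (1) * a t 1 ^ 2 * a t 2 * h t 0 * τ t ^ 2 * C + (1) * a t 0 * h t 2 * C + (-1) * a t 0 * a t 1 ^ 2 * h t 2 * A + (-1) * a t 0 * a t 1 ^ 2 * h t 2 * τ t * B + (-1) * a t 0 * a t 1 ^ 2 * h t 2 * τ t ^ 2 * C + (1) * a t 0 ^ 2 * a t 2 * h t 0 * A + (1) * a t 0 ^ 2 * a t 2 * h t 0 * τ t * B + (1) * a t 0 ^ 2 * a t 2 * h t 0 * τ t ^ 2 * C + (-1) * a t 0 ^ 3 * h t 2 * A + (-1) * a t 0 ^ 3 * h t 2 * τ t * B + (-1) * a t 0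 ^ 3 * h t 2 * τ t ^ 2 * C) / (a t 0 ^ 2 + a t 1 ^ 2))
    · simp only [su11Bracket, Pi.add_apply, Pi.smul_apply, smul_eq_mul,
        Matrix.cons_val_zero, Matrix.cons_val_one, Matrix.head_cons, Fin.isValue,
        Matrix.cons_val_two, Matrix.tail_cons, Fin.zero_eta, Fin.mk_one]
      field_simp
      ring
    · trans (((1) * a t 1 ^ 2 * a t 2 * h t 0 * C + (1) * a t 1 ^ 2 * a t 2 ^ 2 * h t 1 * B + (2) * a t 1 ^ 2 * a t 2 ^ 2 * h t 1 * τ t * C + (-1) * a t 1 ^ 3 * a t 2 * h t 2 * B + (-2) * a t 1 ^ 3 * a t 2 * h t 2 * τ t * C + (-1) * a t 1 ^ 4 * h t 1 * B + (-2) * a t 1 ^ 4 * h t 1 * τ t * C + (1) * a t 1 ^ 4 * a t 2 * h t 0 * A + (1) * a t 1 ^ 4 * a t 2 * h t 0 * τ t * B + (1) * a t 1 ^ 4 * a t 2 * h t 0 * τ t ^ 2 * C + (2) * a t 0 * a t 1 * a t 2 ^ 2 * h t 0 * B + (4) * a t 0 * a t 1 * a t 2 ^ 2 * h t 0 * τ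 t * C + (1) * a t 0 * a t 1 ^ 2 * h t 2 * C + (-2) * a t 0 * a t 1 ^ 3 * h t 0 * B + (-4) * a t 0 * a t 1 ^ 3 * h t 0 * τ t * C + (-1) * a t 0 * a t 1 ^ 4 * h t 2 * A + (-1) * a t 0 * a t 1 ^ 4 * h t 2 * τ t * B + (-1) * a t 0 * a t 1 ^ 4 * h t 2 * τ t ^ 2 * C + (1) * a t 0 ^ 2 * a t 2 * h t 0 * C + (-1) * a t 0 ^ 2 * a t 2 ^ 2 * h t 1 * B + (-2) * a t 0 ^ 2 * a t 2 ^ 2 * h t 1 * τ t * C + (-1) * a t 0 ^ 2 * a t 1 * a t 2 * h t 2 * B + (-2) * a t 0 ^ 2 * a t 1 * a t 2 * h t 2 * τ t * C + (2) * a t 0 ^ 2 * a t 1 ^ 2 * a t 2 * h t 0 * A + (2) * a t 0 ^ 2 * a t 1 ^ 2 * a t 2 * h t 0 * τ t * B + (2) * a t 0 ^ 2 * a t 1 ^ 2 * a t 2 * h t 0 * τ t ^ 2 * C + (1) * a t 0 ^ 3 * h t 2 * C + (-2) * a t 0 ^ 3 * a t 1 * h t 0 * B + (-4) * a t 0 ^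 3 * a t 1 * h t 0 * τ t * C + (-2) * a t 0 ^ 3 * a t 1 ^ 2 * h t 2 * A + (-2) * a t 0 ^ 3 * a t 1 ^ 2 * h t 2 * τ t * B + (-2) * a t 0 ^ 3 * a t 1 ^ 2 * h t 2 * τ t ^ 2 * C + (1) * a t 0 ^ 4 * h t 1 * B + (2) * a t 0 ^ 4 * h t 1 * τ t * C + (1) * a t 0 ^ 4 * a t 2 * h t 0 * A + (1) * a t 0 ^ 4 * a t 2 * h t 0 * τ t * B + (1) * a t 0 ^ 4 * a t 2 * h t 0 * τ t ^ 2 * C + (-1) * a t 0 ^ 5 * h t 2 * A + (-1) * a t 0 ^ 5 * h t 2 * τ t * B + (-1) * a t 0 ^ 5 * h t 2 * τ t ^ 2 * C) / (a t 0 ^ 2 + a t 1 ^ 2) ^ 2)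
      · rw [div_eq_div_iff hd (pow_ne_zero 2 hd)]
        linear_combination ((-1) * a t 1 ^ 4 * h t 1 * B + (-2) * a t 1 ^ 4 * h t 1 * τ t * C + (-2) * a t 0 * a t 1 ^ 3 * h t 0 * B + (-4) * a t 0 * a t 1 ^ 3 * h t 0 * τ t * C + (-2) * a t 0 ^ 3 * a t 1 * h t 0 * B + (-4) * a t 0 ^ 3 * a t 1 * h t 0 * τ t * C + (1) * a t 0 ^ 4 * h t 1 * B + (2) * a t 0 ^ 4 * h t 1 * τ t * C) * hdeg t
      · field_simp
        ring
  · have key := (hP.mul ha2).add (hR.mul ha2)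
    convert key using 1
    · funext s
      simp [Fin.isValue, Matrix.vecHead, Matrix.vecTail]
    have hd := hDne t
    trans (((-1) * a t 1 * h t 0 * C + (-1) * a t 1 * a t 2 * h t 1 * B + (-2) * a t 1 * a t 2 * h t 1 * τ t * C + (1) * a t 1 ^ 3 * h t 0 * A + (1) * a t 1 ^ 3 * h t 0 * τ t * B + (1) * a t 1 ^ 3 * h t 0 * τ t ^ 2 * C + (1) * a t 0 * h t 1 * C + (-1) * a t 0 * a t 2 * h t 0 * B + (-2) * a t 0 * a t 2 * h t 0 * τ t * C + (-1) * a t 0 * a t 1 ^ 2 * h t 1 * A + (-1) * a t 0 * a t 1 ^ 2 * h t 1 * τ t * B + (-1) * a t 0 * a t 1 ^ 2 * h t 1 * τ t ^ 2 * C + (1) * a t 0 ^ 2 * a t 1 * h t 0 * A + (1) * a t 0 ^ 2 * a t 1 * h t 0 * τ t * B + (1) * a t 0 ^ 2 * a t 1 * h t 0 * τ t ^ 2 * C + (-1) * a t 0 ^ 3 * h t 1 * A + (-1) * a t 0 ^ 3 * h t 1 * τ t * B + (-1) * a t 0 ^ 3 * h t 1 * τ t ^ 2 * C) / (a t 0 ^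 2 + a t 1 ^ 2))
    · simp [su11Bracket, Matrix.vecHead, Matrix.vecTail]
      field_simp
      ring
    · trans (((-2) * a t 1 * a t 2 ^ 2 * h t 0 * C + (1) * a t 1 ^ 3 * h t 0 * C + (-1) * a t 1 ^ 3 * a t 2 * h t 1 * B + (-2) * a t 1 ^ 3 * a t 2 * h t 1 * τ t * C + (1) * a t 1 ^ 5 * h t 0 * A + (1) * a t 1 ^ 5 * h t 0 * τ t * B + (1) * a t 1 ^ 5 * h t 0 * τ t ^ 2 * C + (2) * a t 0 * a t 2 ^ 2 * h t 1 * C + (-1) * a t 0 * a t 1 ^ 2 * h t 1 * C + (-1) * a t 0 * a t 1 ^ 2 * a t 2 * h t 0 * B + (-2) * a t 0 * a t 1 ^ 2 * a t 2 * h t 0 * τ t * C + (-1) * a t 0 * a t 1 ^ 4 * h t 1 * A + (-1) * a t 0 * a t 1 ^ 4 * h t 1 * τ t * B + (-1) * a t 0 * a t 1 ^ 4 * h t 1 * τ t ^ 2 * C + (1) * a t 0 ^ 2 * a t 1 * h t 0 * C + (-1) * a t 0 ^ 2 * a t 1 * a t 2 * h t 1 * B + (-2) * a t 0 ^ 2 *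 a t 1 * a t 2 * h t 1 * τ t * C + (2) * a t 0 ^ 2 * a t 1 ^ 3 * h t 0 * A + (2) * a t 0 ^ 2 * a t 1 ^ 3 * h t 0 * τ t * B + (2) * a t 0 ^ 2 * a t 1 ^ 3 * h t 0 * τ t ^ 2 * C + (-1) * a t 0 ^ 3 * h t 1 * C + (-1) * a t 0 ^ 3 * a t 2 * h t 0 * B + (-2) * a t 0 ^ 3 * a t 2 * h t 0 * τ t * C + (-2) * a t 0 ^ 3 * a t 1 ^ 2 * h t 1 * A + (-2) * a t 0 ^ 3 * a t 1 ^ 2 * h t 1 * τ t * B + (-2) * a t 0 ^ 3 * a t 1 ^ 2 * h t 1 * τ t ^ 2 * C + (1) * a t 0 ^ 4 * a t 1 * h t 0 * A + (1) * a t 0 ^ 4 * a t 1 * h t 0 * τ t * B + (1) * a t 0 ^ 4 * a t 1 * h t 0 * τ t ^ 2 * C + (-1) * a t 0 ^ 5 * h t 1 * A + (-1) * a t 0 ^ 5 * h t 1 * τ t * B + (-1) * a t 0 ^ 5 * h t 1 * τ t ^ 2 * C) / (a t 0 ^ 2 + a t 1 ^ 2) ^ 2)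
      · rw [div_eq_div_iff hd (pow_ne_zero 2 hd)]
        linear_combination ((2) * a t 1 ^ 3 * h t 0 * C + (-2) * a t 0 * a t 1 ^ 2 * h t 1 * C + (2) * a t 0 ^ 2 * a t 1 * h t 0 * C + (-2) * a t 0 ^ 3 * h t 1 * C) * hdeg t
      · field_simp
        ring
end
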